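/- arXiv:1711.04995 — 7 statements merged into one kernel-verified Lean document; each statement's English description precedes it below -/
import Mathlib

section
/- Let F : ℝ^n × ℝ^n → ℝ^q be a smooth (C^∞) map and let φ : (ℝ^m)^{r+1} → ℝ^n be a smooth map satisfying the parameter PDE for F. Then for every smooth curve y : ℝ → ℝ^m, defining x(t) = φ(y(t), y'(t), …, y^{(r)}(t)), one has F(x(t), x'(t)) = 0 for all t ∈ ℝ. -/
/-- The operator `L_τ`: `L_τφ(y_0,…,y_{r+1}) = Σ_{i=0}^r (∂φ/∂y_i)(y_0,…,y_r)(y_{i+1})`,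
where `∂φ/∂y_i` is the partial Fréchet derivative of `φ` in its `i`-th block variable. -/
noncomputable def Ltau {m n r : ℕ}
    (φ : (Fin (r+1) → (Fin m → ℝ)) → (Fin n → ℝ))
    (z : Fin (r+2) → (Fin m → ℝ)) : Fin n → ℝ :=
  ∑ i : Fin (r+1), fderiv ℝ φ (fun j => z j.castSucc) (Pi.single i (z i.succ))

/-- If a smooth `φ` satisfies the parameter PDE for `F`, then for every smooth curve `y`,
the curve `x(t) = φ(y(t), y'(t), …, y^{(r)}(t))` satisfies `F(x(t), x'(t)) = 0`. -/
theorem stmt_0 (n m q r : ℕ) (hn : 0 < n) (hm : 0 < m) (hq : 0 < q)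
    (F : (Fin n → ℝ) × (Fin n → ℝ) → (Fin q → ℝ)) (hF : ContDiff ℝ (⊤ : ℕ∞) F)
    (φ : (Fin (r+1) → (Fin m → ℝ)) → (Fin n → ℝ)) (hφ : ContDiff ℝ (⊤ : ℕ∞) φ)
    (hPDE : ∀ z : Fin (r+2) → (Fin m → ℝ),
      F (φ (fun j => z j.castSucc), Ltau φ z) = 0)
    (y : ℝ → (Fin m → ℝ)) (hy : ContDiff ℝ (⊤ : ℕ∞) y) :
    ∀ t : ℝ,
      F (φ (fun i : Fin (r+1) => iteratedDeriv i.val y t),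
         deriv (fun s : ℝ => φ (fun i : Fin (r+1) => iteratedDeriv i.val y s)) t) = 0 := by
  intro t
  set z : Fin (r+2) → (Fin m → ℝ) := fun j => iteratedDeriv j.val y t with hz
  set Y : ℝ → (Fin (r+1) → Fin m → ℝ) := fun s i => iteratedDeriv i.val y s with hY
  have hiter : ∀ k : ℕ, ContDiff ℝ (⊤ : ℕ∞) (iteratedDeriv k y) := by
    intro k
    rw [iteratedDeriv_eq_iterate]
    exact hy.iterate_deriv k
  have hV : HasDerivAt Y (fun i : Fin (r+1) => iteratedDeriv (i.val + 1) y t) t := by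
    rw [hasDerivAt_pi]
    intro i
    have : HasDerivAt (iteratedDeriv i.val y) (deriv (iteratedDeriv i.val y) t) t :=
      ((hiter i.val).differentiable (by simp) t).hasDerivAt
    rw [iteratedDeriv_succ]; exact this
  have hφY : HasDerivAt (fun s => φ (Y s))
      (fderiv ℝ φ (Y t) (fun i : Fin (r+1) => iteratedDeriv (i.val + 1) y t)) t :=
    ((hφ.differentiable (by simp) (Y t)).hasFDerivAt).comp_hasDerivAt t hV
  have hd : deriv (fun s : ℝ => φ (fun i : Fin (r+1) => iteratedDeriv i.val y s)) t
      = Ltau φ z := by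
    rw [show (fun s : ℝ => φ (fun i : Fin (r+1) => iteratedDeriv i.val y s)) = fun s => φ (Y s)
      from rfl, hφY.deriv]
    have hzc : (fun j : Fin (r+1) => z j.castSucc) = Y t := by
      funext j; simp [hz, hY]
    have hsum : (fun i : Fin (r+1) => iteratedDeriv (i.val + 1) y t)
        = ∑ i : Fin (r+1), Pi.single i (z i.succ) := by
      rw [Finset.univ_sum_single (fun i : Fin (r+1) => z i.succ)]
      funext i; simp [hz]
    rw [hsum, Ltau, hzc]
    exact map_sum (fderiv ℝ φ (Y t)) _ _
  have hx : (fun i : Fin (r+1) => iteratedDeriv i.val y t)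
      = fun j : Fin (r+1) => z j.castSucc := by
    funext j; simp [hz]
  rw [hd, hx]
  exact hPDE z
end

section
/- Let F : ℝ^n × ℝ^n → ℝ^q be a smooth (C^∞) map and let φ : (ℝ^m)^{r+1} → ℝ^n be a smooth map. Suppose that for every smooth curve y : ℝ → ℝ^m, defining x(t) = φ(y(t), y'(t), …, y^{(r)}(t)), one has F(x(t), x'(t)) = 0 for all t ∈ ℝ. Then φ satisfies the parameter PDE for F, i.e. F(φ(y_0,…,y_r), L_τφ(y_0,…,y_{r+1})) = 0 for all vectors y_0,…,y_{r+1} ∈ ℝ^m. -/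
open Finset

lemma hasDerivAt_monomial {m : ℕ} (k : ℕ) (v : Fin m → ℝ) (t : ℝ) :
    HasDerivAt (fun t : ℝ => (t ^ k / k.factorial) • v)
      (((k * t ^ (k - 1)) / k.factorial) • v) t :=
  ((hasDerivAt_pow k t).div_const (k.factorial : ℝ)).smul_const v

lemma iter_deriv_poly {m : ℕ} (N : ℕ) (w : ℕ → (Fin m → ℝ)) (j : ℕ) :
    iteratedDeriv j (fun t : ℝ => ∑ k ∈ range N, (t ^ k / k.factorial) • w k)
    = fun t : ℝ => ∑ k ∈ range (N - j), (t ^ k / k.factorial) • w (k + j) := by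
  induction j with
  | zero => simp
  | succ j ih =>
    rw [iteratedDeriv_succ, ih]
    funext t
    have h1 : HasDerivAt
        (fun t : ℝ => ∑ k ∈ range (N - j), (t ^ k / k.factorial) • w (k + j))
        (∑ k ∈ range (N - j), ((k * t ^ (k - 1)) / k.factorial) • w (k + j)) t :=
      HasDerivAt.fun_sum fun k _ => hasDerivAt_monomial k _ t
    rw [h1.deriv]
    rcases Nat.eq_zero_or_pos (N - j) with h | h
    · have h2 : N - (j + 1) = 0 := by omega
      simp [h, h2]
    · obtain ⟨M, hM⟩ : ∃ M, N - j = M + 1 := ⟨N - j - 1, by omega⟩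
      have h2 : N - (j + 1) = M := by omega
      rw [hM, Finset.sum_range_succ', h2]
      simp only [Nat.cast_zero, pow_zero, Nat.factorial_zero, zero_mul, zero_div, zero_smul,
        add_zero]
      refine Finset.sum_congr rfl fun k _ => ?_
      have hfac : ((k + 1).factorial : ℝ) = (k + 1) * k.factorial := by
        rw [Nat.factorial_succ]; push_cast; ring
      have hk : k + 1 + j = k + (j + 1) := by omega
      rw [hk]
      congr 1
      rw [hfac]
      have h0 : (k.factorial : ℝ) ≠ 0 := Nat.cast_ne_zero.mpr k.factorial_ne_zero
      have h1 : ((k : ℝ) + 1) ≠ 0 := by positivity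
      push_cast
      field_simp

lemma eval_zero {m : ℕ} (M : ℕ) (hM : 0 < M) (w : ℕ → (Fin m → ℝ)) (j : ℕ) :
    ∑ k ∈ range M, ((0 : ℝ) ^ k / k.factorial) • w (k + j) = w j := by
  rw [Finset.sum_eq_single 0]
  · simp
  · intro k _ hk; simp [zero_pow hk]
  · intro h; exact absurd (mem_range.mpr hM) h

/-- If for every smooth curve `y`, the curve `x(t) = φ(y(t), y'(t), …, y^{(r)}(t))`
satisfies `F(x(t), x'(t)) = 0`, then `φ` satisfies the parameter PDE for `F`. -/
theorem stmt_1 (n m q r : ℕ) (hn : 0 < n) (hm : 0 < m) (hq : 0 < q)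
    (F : (Fin n → ℝ) × (Fin n → ℝ) → (Fin q → ℝ)) (hF : ContDiff ℝ (⊤ : ℕ∞) F)
    (φ : (Fin (r+1) → (Fin m → ℝ)) → (Fin n → ℝ)) (hφ : ContDiff ℝ (⊤ : ℕ∞) φ)
    (hcurve : ∀ y : ℝ → (Fin m → ℝ), ContDiff ℝ (⊤ : ℕ∞) y → ∀ t : ℝ,
      F (φ (fun i : Fin (r+1) => iteratedDeriv i.val y t),
         deriv (fun s : ℝ => φ (fun i : Fin (r+1) => iteratedDeriv i.val y s)) t) = 0) :
    ∀ z : Fin (r+2) → (Fin m → ℝ),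
      F (φ (fun j => z j.castSucc), Ltau φ z) = 0 := by
  intro z
  set w : ℕ → (Fin m → ℝ) := fun k => if h : k < r + 2 then z ⟨k, h⟩ else 0 with hw
  set y : ℝ → (Fin m → ℝ) :=
    fun t => ∑ k ∈ range (r + 2), (t ^ k / k.factorial) • w k with hy
  have hysmooth : ContDiff ℝ (⊤ : ℕ∞) y := by
    apply ContDiff.sum
    intro k _
    exact ((contDiff_id.pow k).div_const _).smul contDiff_const
  have hval : ∀ j, j < r + 2 → iteratedDeriv j y 0 = w j := by
    intro j hj
    rw [hy, iter_deriv_poly]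
    exact eval_zero _ (by omega) w j
  -- g 0 = fun j => z j.castSucc
  have hg0 : (fun i : Fin (r+1) => iteratedDeriv i.val y 0) = fun j => z j.castSucc := by
    funext i
    rw [hval i.val (by omega), hw]
    simp only
    rw [dif_pos (by omega : (i : ℕ) < r + 2)]
    congr 1
  -- derivative of g at 0
  have hg : HasDerivAt (fun s => (fun i : Fin (r+1) => iteratedDeriv i.val y s))
      (fun i : Fin (r+1) => z i.succ) 0 := by
    rw [hasDerivAt_pi]
    intro i
    have heq : (fun s => iteratedDeriv i.val y s) = iteratedDeriv i.val y := rfl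
    rw [heq, hy, iter_deriv_poly]
    have h1 : HasDerivAt
        (fun t : ℝ => ∑ k ∈ range (r + 2 - i.val), (t ^ k / k.factorial) • w (k + i.val))
        (∑ k ∈ range (r + 2 - i.val), ((k * (0:ℝ) ^ (k - 1)) / k.factorial) • w (k + i.val)) 0 :=
      HasDerivAt.fun_sum fun k _ => hasDerivAt_monomial k _ 0
    have hsum : (∑ k ∈ range (r + 2 - i.val),
        ((k * (0:ℝ) ^ (k - 1)) / k.factorial) • w (k + i.val)) = z i.succ := by
      rw [Finset.sum_eq_single 1]
      · have : w (1 + i.val) = z i.succ := by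
          rw [hw]; simp only
          rw [dif_pos (by omega : 1 + (i : ℕ) < r + 2)]
          have hfin : (⟨1 + i.val, by omega⟩ : Fin (r+2)) = i.succ := by
            apply Fin.ext
            simp only [Fin.val_succ]
            omega
          rw [hfin]
        simp [this]
      · intro k _ hk
        rcases k with _ | k
        · simp
        · have : k ≠ 0 := by omega
          simp [zero_pow this]
      · intro h
        exact absurd (mem_range.mpr (by omega : 1 < r + 2 - i.val)) h
    rw [← hsum]
    exact h1
  have hφd : HasFDerivAt φ (fderiv ℝ φ (fun j => z j.castSucc))
      (fun i : Fin (r+1) => iteratedDeriv i.val y 0) := by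
    rw [hg0]
    exact (hφ.differentiable (by simp) (fun j => z j.castSucc)).hasFDerivAt
  have hcomp : HasDerivAt (fun s : ℝ => φ (fun i : Fin (r+1) => iteratedDeriv i.val y s))
      (fderiv ℝ φ (fun j => z j.castSucc) (fun i : Fin (r+1) => z i.succ)) 0 := by
    exact hφd.comp_hasDerivAt 0 hg
  have hL : Ltau φ z = fderiv ℝ φ (fun j => z j.castSucc) (fun i : Fin (r+1) => z i.succ) := by
    unfold Ltau
    rw [← map_sum]
    congr 1
    exact Finset.univ_sum_single _
  have hkey := hcurve y hysmooth 0
  rw [hg0, hcomp.deriv] at hkey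
  rw [hL]
  exact hkey
end

section
/- Let F : ℝ^n × ℝ^n → ℝ^q and f : ℝ^n × ℝ^μ → ℝ^n be smooth maps with F(x, f(x,u)) = 0 for all (x,u), and assume that for every (x,p) with F(x,p) = 0 there exists u ∈ ℝ^μ with p = f(x,u). Assume that for every (x_0,u_0) ∈ ℝ^n × ℝ^μ there exists a smooth curve x : ℝ → ℝ^n with x(0) = x_0 and x'(t) = f(x(t), u_0) for all t. Let φ : (ℝ^m)^{r+1} → ℝ^n be smooth and let ψ : (ℝ^n)^{s+1} → ℝ^m be smooth, and assume the flatness identity: for every smooth curve x : ℝ → ℝ^n satisfying F(x(t), x'(t)) = 0 for all t, setting y(t) = ψ(x(t), x'(t), …, x^{(s)}(t)), one has x(t) = φ(y(t), y'(t), …, y^{(r)}(t)) for all t. Then the map Φ : (ℝ^m)^{r+2} → ℝ^n × ℝ^n, Φ(y_0,…,y_{r+1}) = (φ(y_0,…,y_r), L_τφ(y_0,…,y_{r+1})), is surjective onto the set {(x,p) ∈ ℝ^n × ℝ^n : F(x,p) = 0}: for every (x_0,p_0) with F(x_0,p_0) = 0 there exist y_0,…,y_{r+1} ∈ ℝ^m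 with Φ(y_0,…,y_{r+1}) = (x_0,p_0). -/
/-- For a differentially flat system, the map
`Φ(y_0,…,y_{r+1}) = (φ(y_0,…,y_r), L_τφ(y_0,…,y_{r+1}))` is surjective onto the
manifold `{(x,p) : F(x,p) = 0}`. -/
theorem stmt_3 (n m q μ r s : ℕ) (hn : 0 < n) (hm : 0 < m) (hq : 0 < q) (hμ : 0 < μ)
    (F : (Fin n → ℝ) × (Fin n → ℝ) → (Fin q → ℝ)) (hF : ContDiff ℝ (⊤ : ℕ∞) F)
    (f : (Fin n → ℝ) × (Fin μ → ℝ) → (Fin n → ℝ)) (hf : ContDiff ℝ (⊤ : ℕ∞) f)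
    (hFf : ∀ (x : Fin n → ℝ) (u : Fin μ → ℝ), F (x, f (x, u)) = 0)
    (hparam : ∀ (x p : Fin n → ℝ), F (x, p) = 0 → ∃ u : Fin μ → ℝ, p = f (x, u))
    (hflow : ∀ (x₀ : Fin n → ℝ) (u₀ : Fin μ → ℝ), ∃ x : ℝ → (Fin n → ℝ),
      ContDiff ℝ (⊤ : ℕ∞) x ∧ x 0 = x₀ ∧ ∀ t : ℝ, deriv x t = f (x t, u₀))
    (φ : (Fin (r+1) → (Fin m → ℝ)) → (Fin n → ℝ)) (hφ : ContDiff ℝ (⊤ : ℕ∞) φ)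
    (ψ : (Fin (s+1) → (Fin n → ℝ)) → (Fin m → ℝ)) (hψ : ContDiff ℝ (⊤ : ℕ∞) ψ)
    (hflat : ∀ x : ℝ → (Fin n → ℝ), ContDiff ℝ (⊤ : ℕ∞) x →
      (∀ t : ℝ, F (x t, deriv x t) = 0) → ∀ t : ℝ,
      x t = φ (fun i : Fin (r+1) => iteratedDeriv i.val
        (fun τ : ℝ => ψ (fun j : Fin (s+1) => iteratedDeriv j.val x τ)) t)) :
    ∀ (x₀ p₀ : Fin n → ℝ), F (x₀, p₀) = 0 →
      ∃ z : Fin (r+2) → (Fin m → ℝ),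
        φ (fun j => z j.castSucc) = x₀ ∧ Ltau φ z = p₀ := by
  
  intro x₀ p₀ hFx
  obtain ⟨u, hu⟩ := hparam x₀ p₀ hFx
  obtain ⟨x, hx, hx0, hx'⟩ := hflow x₀ u
  have hFcurve : ∀ t : ℝ, F (x t, deriv x t) = 0 := by
    intro t; rw [hx' t]; exact hFf _ _
  set y : ℝ → (Fin m → ℝ) := fun τ => ψ (fun j : Fin (s+1) => iteratedDeriv j.val x τ)
    with hy
  have hysm : ContDiff ℝ (⊤ : ℕ∞) y := by
    apply hψ.comp
    apply contDiff_pi.mpr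
    intro j
    rw [show (fun τ : ℝ => iteratedDeriv (j : ℕ) x τ) = iteratedDeriv (j : ℕ) x from rfl,
      iteratedDeriv_eq_iterate]
    exact hx.iterate_deriv _
  set Y : ℝ → (Fin (r+1) → (Fin m → ℝ)) := fun t => fun i : Fin (r+1) =>
    iteratedDeriv i.val y t with hY
  have hxφ : ∀ t : ℝ, x t = φ (Y t) := hflat x hx hFcurve
  set z : Fin (r+2) → (Fin m → ℝ) := fun j => iteratedDeriv j.val y 0 with hz
  have hzY : (fun j : Fin (r+1) => z j.castSucc) = Y 0 := by
    funext j; simp [hz, hY]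
  refine ⟨z, ?_, ?_⟩
  · rw [hzY, ← hxφ 0, hx0]
  · -- derivative computation
    have hYd : HasDerivAt Y (fun i : Fin (r+1) => z i.succ) 0 := by
      apply hasDerivAt_pi.mpr
      intro i
      have hdi : ContDiff ℝ (⊤ : ℕ∞) (iteratedDeriv (i : ℕ) y) := by
        rw [iteratedDeriv_eq_iterate]; exact hysm.iterate_deriv _
      have := (hdi.differentiable (by simp) 0).hasDerivAt
      have hzi : z i.succ = deriv (iteratedDeriv (i : ℕ) y) 0 := by
        rw [hz]; simp [iteratedDeriv_succ]
      rw [hzi]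
      exact this
    have hcomp : HasDerivAt (fun t => φ (Y t))
        (fderiv ℝ φ (Y 0) (fun i : Fin (r+1) => z i.succ)) 0 :=
      (hφ.differentiable (by simp) (Y 0)).hasFDerivAt.comp_hasDerivAt 0 hYd
    have hxeq : x = fun t => φ (Y t) := funext hxφ
    have hdx : deriv x 0 = fderiv ℝ φ (Y 0) (fun i : Fin (r+1) => z i.succ) := by
      rw [hxeq]; exact hcomp.deriv
    have hp : p₀ = fderiv ℝ φ (Y 0) (fun i : Fin (r+1) => z i.succ) := by
      rw [← hdx, hx' 0, hx0, hu]
    rw [hp]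
    unfold Ltau
    rw [hzY]
    rw [← map_sum]
    congr 1
    exact Finset.univ_sum_single _
end

section
/- Let F : ℝ^n × ℝ^n → ℝ^q be smooth, φ : (ℝ^m)^{r+1} → ℝ^n and ψ : (ℝ^n)^{s+1} → ℝ^m smooth maps, and assume the two-sided flatness identities: (i) for every smooth curve y : ℝ → ℝ^m, setting x(t) = φ(y(t), y'(t), …, y^{(r)}(t)), one has F(x(t), x'(t)) = 0 and y(t) = ψ(x(t), x'(t), …, x^{(s)}(t)) for all t; (ii) for every smooth curve x : ℝ → ℝ^n with F(x(t), x'(t)) = 0 for all t, setting y(t) = ψ(x(t), x'(t), …, x^{(s)}(t)), one has x(t) = φ(y(t), y'(t), …, y^{(r)}(t)) for all t. Then the map y_0 ↦ φ(y_0, 0, …, 0) is a bijection from ℝ^m onto the equilibrium variety {x ∈ ℝ^n : F(x,0) = 0}, with inverse x_0 ↦ ψ(x_0, 0, …, 0). -/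
lemma itd_const {E : Type*} [NormedAddCommGroup E] [NormedSpace ℝ E] (c : E) (k : ℕ) :
    iteratedDeriv k (fun _ : ℝ => c) = fun _ => if k = 0 then c else 0 := by
  induction k with
  | zero => simp [iteratedDeriv_zero]
  | succ k ih =>
    rw [iteratedDeriv_succ, ih]
    split <;> simp [deriv_const']

lemma itd_const_fin {E : Type*} [NormedAddCommGroup E] [NormedSpace ℝ E] (c : E) (k : ℕ)
    (t : ℝ) : (fun i : Fin (k+1) => iteratedDeriv i.val (fun _ : ℝ => c) t)
      = Pi.single (0 : Fin (k+1)) c := by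
  funext i
  rw [itd_const, Pi.single_apply]
  by_cases h : i = 0
  · subst h; rw [if_pos (Fin.val_zero _), if_pos rfl]
  · have h2 : i.val ≠ 0 := fun h' => h (Fin.ext (h'.trans (Fin.val_zero _).symm))
    rw [if_neg h2, if_neg h]

/-- If `(φ, ψ)` realize a two-sided (Lie–Bäcklund / flatness) correspondence between
smooth curves `y` in `ℝ^m` and smooth solutions `x` of `F(x, ẋ) = 0`, then
`y₀ ↦ φ(y₀,0,…,0)` is a bijection from `ℝ^m` onto the equilibrium variety
`{x : F(x,0) = 0}`, with inverse `x₀ ↦ ψ(x₀,0,…,0)`. -/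
theorem stmt_7 (n m q r s : ℕ) (hn : 0 < n) (hm : 0 < m) (hq : 0 < q)
    (F : (Fin n → ℝ) × (Fin n → ℝ) → (Fin q → ℝ)) (hF : ContDiff ℝ (⊤ : ℕ∞) F)
    (φ : (Fin (r+1) → (Fin m → ℝ)) → (Fin n → ℝ)) (hφ : ContDiff ℝ (⊤ : ℕ∞) φ)
    (ψ : (Fin (s+1) → (Fin n → ℝ)) → (Fin m → ℝ)) (hψ : ContDiff ℝ (⊤ : ℕ∞) ψ)
    (hforward : ∀ y : ℝ → (Fin m → ℝ), ContDiff ℝ (⊤ : ℕ∞) y → ∀ t : ℝ,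
      F (φ (fun i : Fin (r+1) => iteratedDeriv i.val y t),
         deriv (fun τ : ℝ => φ (fun i : Fin (r+1) => iteratedDeriv i.val y τ)) t) = 0 ∧
      y t = ψ (fun j : Fin (s+1) => iteratedDeriv j.val
        (fun τ : ℝ => φ (fun i : Fin (r+1) => iteratedDeriv i.val y τ)) t))
    (hbackward : ∀ x : ℝ → (Fin n → ℝ), ContDiff ℝ (⊤ : ℕ∞) x →
      (∀ t : ℝ, F (x t, deriv x t) = 0) → ∀ t : ℝ,
      x t = φ (fun i : Fin (r+1) => iteratedDeriv i.val
        (fun τ : ℝ => ψ (fun j : Fin (s+1) => iteratedDeriv j.val x τ)) t)) :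
    (∀ y₀ : Fin m → ℝ, F (φ (Pi.single (0 : Fin (r+1)) y₀), 0) = 0) ∧
    (∀ y₀ : Fin m → ℝ,
      ψ (Pi.single (0 : Fin (s+1)) (φ (Pi.single (0 : Fin (r+1)) y₀))) = y₀) ∧
    (∀ x₀ : Fin n → ℝ, F (x₀, 0) = 0 →
      φ (Pi.single (0 : Fin (r+1)) (ψ (Pi.single (0 : Fin (s+1)) x₀))) = x₀) := by
  have key : ∀ y₀ : Fin m → ℝ,
      (fun τ : ℝ => φ (fun i : Fin (r+1) => iteratedDeriv i.val (fun _ : ℝ => y₀) τ))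
        = fun _ : ℝ => φ (Pi.single (0 : Fin (r+1)) y₀) := by
    intro y₀; funext τ; rw [itd_const_fin]
  refine ⟨?_, ?_, ?_⟩
  · intro y₀
    have h := (hforward (fun _ => y₀) contDiff_const 0).1
    rw [itd_const_fin, key] at h
    simpa [deriv_const'] using h
  · intro y₀
    have h := (hforward (fun _ => y₀) contDiff_const 0).2
    rw [key, itd_const_fin] at h
    exact h.symm
  · intro x₀ hx₀
    have h := hbackward (fun _ => x₀) contDiff_const
      (fun t => by simpa [deriv_const'] using hx₀) 0
    have key2 : (fun τ : ℝ => ψ (fun j : Fin (s+1) => iteratedDeriv j.val (fun _ : ℝ => x₀) τ))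
        = fun _ : ℝ => ψ (Pi.single (0 : Fin (s+1)) x₀) := by
      funext τ; rw [itd_const_fin]
    rw [key2, itd_const_fin] at h
    exact h.symm
end

section
/- Let F : ℝ^n × ℝ^n → ℝ^q and f : ℝ^n × ℝ^m → ℝ^n be differentiable maps with F(x, f(x,u)) = 0 for all (x,u). Fix (x,u) and suppose that the linear map ∂F/∂p(x, f(x,u)) : ℝ^n → ℝ^q has rank n − m and that ∂f/∂u(x,u) : ℝ^m → ℝ^n is injective. Then the range of ∂f/∂u(x,u) equals the kernel of ∂F/∂p(x, f(x,u)). -/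
/-- If `F(x, f(x,u)) = 0` everywhere, `∂F/∂p(x,f(x,u))` has rank `n - m`, and
`∂f/∂u(x,u)` is injective, then the range of `∂f/∂u(x,u)` equals the kernel of
`∂F/∂p(x,f(x,u))`. -/
theorem stmt_9 (n m q : ℕ) (hn : 0 < n) (hm : 0 < m) (hq : 0 < q) (hmn : m ≤ n)
    (F : (Fin n → ℝ) × (Fin n → ℝ) → (Fin q → ℝ)) (hF : Differentiable ℝ F)
    (f : (Fin n → ℝ) × (Fin m → ℝ) → (Fin n → ℝ)) (hf : Differentiable ℝ f)
    (hFf : ∀ (x : Fin n → ℝ) (u : Fin m → ℝ), F (x, f (x, u)) = 0)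
    (x : Fin n → ℝ) (u : Fin m → ℝ)
    (hrank : Module.finrank ℝ
      (LinearMap.range (fderiv ℝ (fun p => F (x, p)) (f (x, u)) : (Fin n → ℝ) →ₗ[ℝ] (Fin q → ℝ))) = n - m)
    (hinj : Function.Injective (fderiv ℝ (fun u' => f (x, u')) u)) :
    LinearMap.range (fderiv ℝ (fun u' => f (x, u')) u : (Fin m → ℝ) →ₗ[ℝ] (Fin n → ℝ)) =
      LinearMap.ker (fderiv ℝ (fun p => F (x, p)) (f (x, u)) : (Fin n → ℝ) →ₗ[ℝ] (Fin q → ℝ)) := by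
  set A := fderiv ℝ (fun p => F (x, p)) (f (x, u)) with hA
  set B := fderiv ℝ (fun u' => f (x, u')) u with hB
  have hFd : Differentiable ℝ (fun p => F (x, p)) :=
    hF.comp (Differentiable.prodMk (differentiable_const x) differentiable_id)
  have hfd : Differentiable ℝ (fun u' => f (x, u')) :=
    hf.comp (Differentiable.prodMk (differentiable_const x) differentiable_id)
  have hcomp : A.comp B = 0 := by
    have h1 : (fun u' => F (x, f (x, u'))) = fun _ => (0 : Fin q → ℝ) := by
      funext u'; exact hFf x u'
    have h2 : fderiv ℝ (fun u' => F (x, f (x, u'))) u = A.comp B := by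
      exact fderiv_comp u (hFd (f (x, u))) (hfd u)
    rw [h1, fderiv_const_apply] at h2
    exact h2.symm
  have hle : LinearMap.range (B : (Fin m → ℝ) →ₗ[ℝ] (Fin n → ℝ)) ≤ LinearMap.ker (A : (Fin n → ℝ) →ₗ[ℝ] (Fin q → ℝ)) := by
    rintro _ ⟨v, rfl⟩
    have : (A.comp B) v = 0 := by rw [hcomp]; rfl
    simpa using this
  -- dimensions
  have hrange : Module.finrank ℝ (LinearMap.range (B : (Fin m → ℝ) →ₗ[ℝ] (Fin n → ℝ))) = m := by
    have := LinearMap.finrank_range_of_inj (f := (B : (Fin m → ℝ) →ₗ[ℝ] (Fin n → ℝ))) hinj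
    simpa using this
  have hker : Module.finrank ℝ (LinearMap.ker (A : (Fin n → ℝ) →ₗ[ℝ] (Fin q → ℝ))) = m := by
    have hrn := LinearMap.finrank_range_add_finrank_ker
      (A : (Fin n → ℝ) →ₗ[ℝ] (Fin q → ℝ))
    rw [show LinearMap.range (A : (Fin n → ℝ) →ₗ[ℝ] (Fin q → ℝ)) = LinearMap.range (A : (Fin n → ℝ) →ₗ[ℝ] (Fin q → ℝ)) from rfl,
      hrank,
      show LinearMap.ker (A : (Fin n → ℝ) →ₗ[ℝ] (Fin q → ℝ)) = LinearMap.ker (A : (Fin n → ℝ) →ₗ[ℝ] (Fin q → ℝ)) from rfl] at hrn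
    have : Module.finrank ℝ (Fin n → ℝ) = n := by simp
    omega
  exact Submodule.eq_of_le_of_finrank_eq hle (by rw [hrange, hker])
end

section
/- Let F : ℝ^n × ℝ^n → ℝ^q be smooth and let φ : (ℝ^m)^{r+1} → ℝ^n be a smooth map satisfying the parameter PDE for F. Fix y_0 ∈ ℝ^m and let y* = (y_0, 0, …, 0) ∈ (ℝ^m)^{r+1}, x* = φ(y*), C_x = ∂F/∂x(x*, 0), C_p = ∂F/∂p(x*, 0), and P_i = (∂φ/∂y_i)(y*) for 0 ≤ i ≤ r. Then: C_x ∘ P_0 = 0; C_x ∘ P_i + C_p ∘ P_{i−1} = 0 for every 1 ≤ i ≤ r; and C_p ∘ P_r = 0. -/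
private lemma snoc_succ_eq {α : Type*} {r : ℕ} (f : Fin (r+1) → α) (a : α) (k : Fin (r+1)) :
    (Fin.snoc f a : Fin (r+2) → α) k.succ
      = if h : (k : ℕ) < r then f ⟨(k : ℕ)+1, by omega⟩ else a := by
  split_ifs with h
  · have hk : (k.succ : Fin (r+2)) = Fin.castSucc ⟨(k : ℕ)+1, by omega⟩ := by
      ext; simp
    rw [hk, Fin.snoc_castSucc]
  · have hk : k = Fin.last r := by
      ext
      have := k.isLt
      simp only [Fin.val_last]
      omega
    subst hk
    rw [Fin.succ_last, Fin.snoc_last]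

/-- Differentiating the parameter PDE at a point `y* = (y₀,0,…,0)`: with
`x* = φ(y*)`, `C_x = ∂F/∂x(x*,0)`, `C_p = ∂F/∂p(x*,0)`, and
`P_i = (∂φ/∂y_i)(y*)`, one has `C_x ∘ P_0 = 0`, `C_x ∘ P_i + C_p ∘ P_{i-1} = 0`
for `1 ≤ i ≤ r`, and `C_p ∘ P_r = 0`. -/
theorem stmt_11 (n m q r : ℕ) (hn : 0 < n) (hm : 0 < m) (hq : 0 < q)
    (F : (Fin n → ℝ) × (Fin n → ℝ) → (Fin q → ℝ)) (hF : ContDiff ℝ (⊤ : ℕ∞) F)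
    (φ : (Fin (r+1) → (Fin m → ℝ)) → (Fin n → ℝ)) (hφ : ContDiff ℝ (⊤ : ℕ∞) φ)
    (hPDE : ∀ z : Fin (r+2) → (Fin m → ℝ),
      F (φ (fun j => z j.castSucc), Ltau φ z) = 0)
    (y₀ : Fin m → ℝ) :
    (∀ v : Fin m → ℝ,
      fderiv ℝ (fun x => F (x, 0)) (φ (Pi.single (0 : Fin (r+1)) y₀))
        (fderiv ℝ φ (Pi.single (0 : Fin (r+1)) y₀) (Pi.single (0 : Fin (r+1)) v)) = 0) ∧
    (∀ (i : ℕ) (h1 : 1 ≤ i) (h2 : i ≤ r), ∀ v : Fin m → ℝ,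
      fderiv ℝ (fun x => F (x, 0)) (φ (Pi.single (0 : Fin (r+1)) y₀))
        (fderiv ℝ φ (Pi.single (0 : Fin (r+1)) y₀)
          (Pi.single (⟨i, by omega⟩ : Fin (r+1)) v)) +
      fderiv ℝ (fun p => F (φ (Pi.single (0 : Fin (r+1)) y₀), p)) 0
        (fderiv ℝ φ (Pi.single (0 : Fin (r+1)) y₀)
          (Pi.single (⟨i - 1, by omega⟩ : Fin (r+1)) v)) = 0) ∧
    (∀ v : Fin m → ℝ,
      fderiv ℝ (fun p => F (φ (Pi.single (0 : Fin (r+1)) y₀), p)) 0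
        (fderiv ℝ φ (Pi.single (0 : Fin (r+1)) y₀) (Pi.single (Fin.last r) v)) = 0) := by
  classical
  have hφd : Differentiable ℝ φ := hφ.differentiable (by simp)
  have hFd : Differentiable ℝ F := hF.differentiable (by simp)
  set ys : Fin (r+1) → (Fin m → ℝ) := Pi.single (0 : Fin (r+1)) y₀ with hys
  set xs : Fin n → ℝ := φ ys with hxs
  set DF := fderiv ℝ F (xs, 0) with hDF
  -- partial derivative identifications
  have hCx : ∀ a : Fin n → ℝ,
      fderiv ℝ (fun x => F (x, (0 : Fin n → ℝ))) xs a = DF (a, 0) := by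
    intro a
    have h1 : HasFDerivAt (fun x : Fin n → ℝ => (x, (0 : Fin n → ℝ)))
        (ContinuousLinearMap.inl ℝ (Fin n → ℝ) (Fin n → ℝ)) xs :=
      (ContinuousLinearMap.inl ℝ (Fin n → ℝ) (Fin n → ℝ)).hasFDerivAt
    have h2 := ((hFd (xs, 0)).hasFDerivAt.comp xs h1)
    have h3 : HasFDerivAt (fun x : Fin n → ℝ => F (x, (0 : Fin n → ℝ)))
        (DF.comp (ContinuousLinearMap.inl ℝ (Fin n → ℝ) (Fin n → ℝ))) xs := h2
    rw [h3.fderiv]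
    rfl
  have hCp : ∀ b : Fin n → ℝ,
      fderiv ℝ (fun p => F (xs, p)) (0 : Fin n → ℝ) b = DF (0, b) := by
    intro b
    have h1 : HasFDerivAt (fun p : Fin n → ℝ => ((xs : Fin n → ℝ), p))
        (((0 : (Fin n → ℝ) →L[ℝ] (Fin n → ℝ))).prod
          (ContinuousLinearMap.id ℝ (Fin n → ℝ))) (0 : Fin n → ℝ) :=
      (hasFDerivAt_const xs (0 : Fin n → ℝ)).prodMk (hasFDerivAt_id (0 : Fin n → ℝ))
    have h2 := ((hFd (xs, 0)).hasFDerivAt.comp (0 : Fin n → ℝ) h1)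
    have h3 : HasFDerivAt (fun p : Fin n → ℝ => F (xs, p))
        (DF.comp (((0 : (Fin n → ℝ) →L[ℝ] (Fin n → ℝ))).prod
          (ContinuousLinearMap.id ℝ (Fin n → ℝ)))) (0 : Fin n → ℝ) := h2
    rw [h3.fderiv]
    rfl
  -- key: differentiate a curve along which the PDE holds
  have key : ∀ (ψ : ℝ → ((Fin n → ℝ) × (Fin n → ℝ))) (d : (Fin n → ℝ) × (Fin n → ℝ)),
      HasDerivAt ψ d 0 → ψ 0 = (xs, 0) → (∀ t, F (ψ t) = 0) → DF d = 0 := by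
    intro ψ d hψ h0 hz
    have hF' : HasFDerivAt F DF (ψ 0) := by rw [h0]; exact (hFd (xs, 0)).hasFDerivAt
    have h1 : HasDerivAt (fun t => F (ψ t)) (DF d) 0 := hF'.comp_hasDerivAt 0 hψ
    have h2 : (fun t => F (ψ t)) = fun _ => (0 : Fin q → ℝ) := funext hz
    rw [h2] at h1
    exact h1.unique (hasDerivAt_const _ _)
  -- Ltau on a snoc
  have hfst : ∀ (f : Fin (r+1) → Fin m → ℝ) (a : Fin m → ℝ),
      (fun j : Fin (r+1) => (Fin.snoc f a : Fin (r+2) → Fin m → ℝ) j.castSucc) = f :=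
    fun f a => funext fun j => by simp
  have hLtau : ∀ (f : Fin (r+1) → Fin m → ℝ) (a : Fin m → ℝ),
      Ltau φ (Fin.snoc f a) = ∑ k : Fin (r+1),
        fderiv ℝ φ f (Pi.single k ((Fin.snoc f a : Fin (r+2) → Fin m → ℝ) k.succ)) := by
    intro f a
    unfold Ltau
    rw [hfst]
  refine ⟨?_, ?_, ?_⟩
  · -- Part 1
    intro v
    set w : Fin (r+1) → Fin m → ℝ := Pi.single (0 : Fin (r+1)) v with hw
    set γ : ℝ → (Fin (r+1) → Fin m → ℝ) := fun t => ys + t • w with hγ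
    have hγ0 : γ 0 = ys := by simp [hγ]
    have hγd : HasDerivAt γ w 0 := by
      have h := ((hasDerivAt_id (0:ℝ)).smul_const w).const_add ys
      simpa [hγ] using h
    have hφ0 : HasFDerivAt φ (fderiv ℝ φ ys) (γ 0) := by
      rw [hγ0]; exact (hφd ys).hasFDerivAt
    have hφγ : HasDerivAt (fun t => φ (γ t)) (fderiv ℝ φ ys w) 0 :=
      hφ0.comp_hasDerivAt 0 hγd
    have hψ : HasDerivAt (fun t => (φ (γ t), (0 : Fin n → ℝ)))
        ((fderiv ℝ φ ys w, 0) : (Fin n → ℝ) × (Fin n → ℝ)) 0 :=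
      hφγ.prodMk (hasDerivAt_const (0 : ℝ) (0 : Fin n → ℝ))
    have hzero : ∀ t, F (φ (γ t), (0 : Fin n → ℝ)) = 0 := by
      intro t
      have h := hPDE (Fin.snoc (γ t) 0)
      rw [hfst (γ t) 0] at h
      have hL : Ltau φ (Fin.snoc (γ t) 0) = 0 := by
        rw [hLtau]
        apply Finset.sum_eq_zero
        intro k _
        have hz : (Fin.snoc (γ t) (0 : Fin m → ℝ) : Fin (r+2) → Fin m → ℝ) k.succ = 0 := by
          rw [snoc_succ_eq]
          split_ifs with h'
          · have hne : (⟨(k : ℕ)+1, by omega⟩ : Fin (r+1)) ≠ 0 := by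
              rw [Ne, Fin.ext_iff, Fin.val_zero]; exact Nat.succ_ne_zero _
            simp [hγ, hys, hw, Pi.single_eq_of_ne hne]
          · rfl
        rw [hz]
        simp
      rw [hL] at h
      exact h
    have hk := key _ _ hψ (by rw [hγ0]) hzero
    rw [hCx]
    exact hk
  · -- Part 2
    intro i hi1 hi2 v
    have hIlt : i < r + 1 := by omega
    have hJlt : i - 1 < r + 1 := by omega
    set I : Fin (r+1) := ⟨i, hIlt⟩ with hIdef
    set J : Fin (r+1) := ⟨i-1, hJlt⟩ with hJdef
    set wI : Fin (r+1) → Fin m → ℝ := Pi.single I v with hwI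
    set γ : ℝ → (Fin (r+1) → Fin m → ℝ) := fun t => ys + t • wI with hγ
    have hγ0 : γ 0 = ys := by simp [hγ]
    have hγd : HasDerivAt γ wI 0 := by
      have h := ((hasDerivAt_id (0:ℝ)).smul_const wI).const_add ys
      simpa [hγ] using h
    have hφ0 : HasFDerivAt φ (fderiv ℝ φ ys) (γ 0) := by
      rw [hγ0]; exact (hφd ys).hasFDerivAt
    have hφγ : HasDerivAt (fun t => φ (γ t)) (fderiv ℝ φ ys wI) 0 :=
      hφ0.comp_hasDerivAt 0 hγd
    set g : ℝ → (Fin n → ℝ) := fun t => fderiv ℝ φ (γ t) (Pi.single J v) with hgdef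
    have hg0 : g 0 = fderiv ℝ φ ys (Pi.single J v) := by rw [hgdef]; simp [hγ0]
    have hDφ : ContDiff ℝ (⊤ : ℕ∞) (fderiv ℝ φ) := hφ.fderiv_right (by exact_mod_cast le_top)
    have hgd : DifferentiableAt ℝ g 0 := by
      have h3 : DifferentiableAt ℝ (fun y => fderiv ℝ φ y (Pi.single J v)) (γ 0) :=
        (hDφ.differentiable (by simp) (γ 0)).clm_apply (differentiableAt_const _)
      exact h3.comp 0 hγd.differentiableAt
    have hp : HasDerivAt (fun t : ℝ => t • g t) (g 0) 0 := by
      have h := (hasDerivAt_id (0:ℝ)).smul hgd.hasDerivAt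
      simp at h; exact h
    have hψ : HasDerivAt (fun t => (φ (γ t), t • g t))
        ((fderiv ℝ φ ys wI, g 0) : (Fin n → ℝ) × (Fin n → ℝ)) 0 :=
      hφγ.prodMk hp
    have hzero : ∀ t, F (φ (γ t), t • g t) = 0 := by
      intro t
      have h := hPDE (Fin.snoc (γ t) 0)
      rw [hfst (γ t) 0] at h
      have hL : Ltau φ (Fin.snoc (γ t) 0) = t • g t := by
        rw [hLtau]
        rw [Finset.sum_eq_single J]
        · have hJr : (J : ℕ) < r := by simp [hJdef]; omega
          rw [snoc_succ_eq, dif_pos hJr]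
          have hidx : (⟨(J : ℕ)+1, by omega⟩ : Fin (r+1)) = I := by
            apply Fin.ext
            simp only [hIdef, hJdef]
            omega
          rw [hidx]
          have hγI : γ t I = t • v := by
            have hI0 : I ≠ 0 := by simp [hIdef, Fin.ext_iff]; omega
            simp [hγ, hys, hwI, Pi.single_eq_of_ne hI0, Pi.single_eq_same]
          rw [hγI, Pi.single_smul, map_smul]
        · intro k _ hk
          have hz : (Fin.snoc (γ t) (0 : Fin m → ℝ) : Fin (r+2) → Fin m → ℝ) k.succ = 0 := by
            rw [snoc_succ_eq]
            split_ifs with h'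
            · have hne0 : (⟨(k : ℕ)+1, by omega⟩ : Fin (r+1)) ≠ 0 := by
                rw [Ne, Fin.ext_iff, Fin.val_zero]; exact Nat.succ_ne_zero _
              have hneI : (⟨(k : ℕ)+1, by omega⟩ : Fin (r+1)) ≠ I := by
                simp only [hIdef, Fin.ext_iff, ne_eq]
                intro hc
                apply hk
                simp [hJdef, Fin.ext_iff]
                omega
              simp [hγ, hys, hwI, Pi.single_eq_of_ne hne0, Pi.single_eq_of_ne hneI]
            · rfl
          rw [hz]
          simp
        · simp
      rw [hL] at h
      exact h
    have hk := key _ _ hψ (by rw [hγ0]; simp; rfl) hzero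
    rw [hCx, hCp]
    have hsplit : ((fderiv ℝ φ ys wI, g 0) : (Fin n → ℝ) × (Fin n → ℝ))
        = (fderiv ℝ φ ys wI, 0) + (0, g 0) := by simp
    rw [hsplit, map_add] at hk
    rw [← hg0]
    exact hk
  · -- Part 3
    intro v
    set u : Fin n → ℝ := fderiv ℝ φ ys (Pi.single (Fin.last r) v) with hu
    have hψ : HasDerivAt (fun t : ℝ => ((xs : Fin n → ℝ), t • u))
        ((0, u) : (Fin n → ℝ) × (Fin n → ℝ)) 0 := by
      refine (hasDerivAt_const (0 : ℝ) xs).prodMk ?_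
      have h := (hasDerivAt_id (0:ℝ)).smul_const u
      simpa using h
    have hzero : ∀ t : ℝ, F (xs, t • u) = 0 := by
      intro t
      have h := hPDE (Fin.snoc ys (t • v))
      rw [hfst ys (t • v)] at h
      have hL : Ltau φ (Fin.snoc ys (t • v)) = t • u := by
        rw [hLtau]
        rw [Finset.sum_eq_single (Fin.last r)]
        · have : ¬ ((Fin.last r : Fin (r+1)) : ℕ) < r := by simp
          rw [snoc_succ_eq, dif_neg this]
          rw [Pi.single_smul, map_smul, hu]
        · intro k _ hk
          have hkr : (k : ℕ) < r := by
            have := k.isLt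
            have : (k : ℕ) ≠ r := fun hc => hk (by ext; simp [hc])
            omega
          rw [snoc_succ_eq, dif_pos hkr]
          have hne0 : (⟨(k : ℕ)+1, by omega⟩ : Fin (r+1)) ≠ 0 := by
            rw [Ne, Fin.ext_iff, Fin.val_zero]; exact Nat.succ_ne_zero _
          rw [hys, Pi.single_eq_of_ne hne0]
          simp
        · simp
      rw [hL] at h
      exact h
    have hk := key _ _ hψ (by simp) hzero
    rw [hCp]
    exact hk
end

section
/- (Main theorem: the flatness criterion implies the Kalman rank condition at equilibrium points.) Let F : ℝ^n × ℝ^n → ℝ^q and f : ℝ^n × ℝ^m → ℝ^n be smooth maps with F(x, f(x,u)) = 0 for all (x,u). Let φ : (ℝ^m)^{r+1} → ℝ^n be a smooth map satisfying the parameter PDE for F. Let (x_0, u_0) be an equilibrium point, i.e. f(x_0, u_0) = 0, let y_0 ∈ ℝ^m satisfy φ(y_0, 0, …, 0) = x_0, and assume the Fréchet derivative of φ at (y_0, 0, …, 0) is surjective onto ℝ^n. Set A = ∂f/∂x(x_0, u_0) : ℝ^n → ℝ^n and B = range(∂f/∂u(x_0, u_0)) ⊆ ℝ^n, and assume B = ker(∂F/∂p(x_0,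 0)). Then B + A(B) + A²(B) + ⋯ + A^r(B) = ℝ^n; in particular the linearization of the system at the equilibrium satisfies the Kalman controllability rank condition. -/
section Aux
variable {m n r : ℕ}

noncomputable def sing (m : ℕ) {k : ℕ} (i : Fin k) :
    (Fin m → ℝ) →L[ℝ] (Fin k → Fin m → ℝ) :=
  ContinuousLinearMap.pi (Pi.single i (ContinuousLinearMap.id ℝ (Fin m → ℝ)))

@[simp] lemma sing_apply {k : ℕ} (i : Fin k) (u : Fin m → ℝ) :
    sing m i u = Pi.single i u := by
  ext j; by_cases h : j = i <;> simp [sing, h, Pi.single_apply]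

noncomputable def resG (m r : ℕ) : (Fin (r+2) → Fin m → ℝ) →L[ℝ] (Fin (r+1) → Fin m → ℝ) :=
  ContinuousLinearMap.pi (fun j => ContinuousLinearMap.proj j.castSucc)

@[simp] lemma resG_apply (z : Fin (r+2) → Fin m → ℝ) :
    resG m r z = fun j => z j.castSucc := rfl

noncomputable def sig (m r : ℕ) (i : Fin (r+1)) :
    (Fin (r+2) → Fin m → ℝ) →L[ℝ] (Fin (r+1) → Fin m → ℝ) :=
  (sing m i).comp (ContinuousLinearMap.proj i.succ)

@[simp] lemma sig_apply (i : Fin (r+1)) (z : Fin (r+2) → Fin m → ℝ) :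
    sig m r i z = Pi.single i (z i.succ) := by simp [sig]

lemma hasFDerivAt_Ltau (φ : (Fin (r+1) → (Fin m → ℝ)) → (Fin n → ℝ))
    (hφ : ContDiff ℝ (⊤ : ℕ∞) φ) (z₀ : Fin (r+2) → (Fin m → ℝ))
    (hz : ∀ i : Fin (r+1), z₀ i.succ = 0) :
    HasFDerivAt (Ltau φ)
      (∑ i : Fin (r+1), (fderiv ℝ φ (resG m r z₀)).comp (sig m r i)) z₀ := by
  have hΦ : ContDiff ℝ (1 : ℕ∞) (fderiv ℝ φ) := hφ.fderiv_right (by exact_mod_cast le_top)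
  have key : ∀ i : Fin (r+1),
      HasFDerivAt (fun z => fderiv ℝ φ (resG m r z) (sig m r i z))
        ((fderiv ℝ φ (resG m r z₀)).comp (sig m r i)) z₀ := by
    intro i
    have h1 : HasFDerivAt (fun z => (fderiv ℝ φ (resG m r z), sig m r i z))
        (((fderiv ℝ (fderiv ℝ φ) (resG m r z₀)).comp (resG m r)).prod (sig m r i)) z₀ := by
      refine HasFDerivAt.prodMk ?_ (sig m r i).hasFDerivAt
      exact ((hΦ.differentiable (by norm_num) _).hasFDerivAt.comp z₀ (resG m r).hasFDerivAt)
    have h2 := (isBoundedBilinearMap_apply (𝕜 := ℝ)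
        (E := Fin (r+1) → Fin m → ℝ) (F := Fin n → ℝ)).hasFDerivAt
        (fderiv ℝ φ (resG m r z₀), sig m r i z₀)
    have h3 := h2.comp z₀ h1
    convert h3 using 1 <;> try rfl
    ext w
    have hz0 : sig m r i z₀ = 0 := by simp [hz i]
    simp [IsBoundedBilinearMap.deriv_apply, hz0]
  have := HasFDerivAt.sum (fun i (_ : i ∈ Finset.univ) => key i)
  convert this using 1 <;> try rfl
  ext z
  simp [Ltau]

lemma sum_submodule_le {ι : Type*} {E : Type*} [AddCommGroup E] [Module ℝ E]
    (s : Finset ι) (p : ι → Submodule ℝ E) (q : Submodule ℝ E)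
    (h : ∀ j ∈ s, p j ≤ q) : ∑ j ∈ s, p j ≤ q := by
  induction s using Finset.cons_induction with
  | empty => simp
  | cons a s ha ih =>
    rw [Finset.sum_cons, Submodule.add_eq_sup]
    exact sup_le (h a (Finset.mem_cons_self a s)) (ih fun j hj => h j (Finset.mem_cons_of_mem hj))

end Aux

/-- Main theorem: the flatness criterion implies the Kalman rank condition at
equilibrium points. If `φ` satisfies the parameter PDE for `F`, `(x₀,u₀)` is an
equilibrium (`f(x₀,u₀) = 0`), `φ(y₀,0,…,0) = x₀`, the derivative of `φ` at
`(y₀,0,…,0)` is surjective, and `B = range ∂f/∂u(x₀,u₀) = ker ∂F/∂p(x₀,0)`, then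
with `A = ∂f/∂x(x₀,u₀)` one has `B + A(B) + ⋯ + A^r(B) = ℝ^n`. -/
theorem stmt_14 (n m q r : ℕ) (hn : 0 < n) (hm : 0 < m) (hq : 0 < q)
    (F : (Fin n → ℝ) × (Fin n → ℝ) → (Fin q → ℝ)) (hF : ContDiff ℝ (⊤ : ℕ∞) F)
    (f : (Fin n → ℝ) × (Fin m → ℝ) → (Fin n → ℝ)) (hf : ContDiff ℝ (⊤ : ℕ∞) f)
    (hFf : ∀ (x : Fin n → ℝ) (u : Fin m → ℝ), F (x, f (x, u)) = 0)
    (φ : (Fin (r+1) → (Fin m → ℝ)) → (Fin n → ℝ)) (hφ : ContDiff ℝ (⊤ : ℕ∞) φ)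
    (hPDE : ∀ z : Fin (r+2) → (Fin m → ℝ),
      F (φ (fun j => z j.castSucc), Ltau φ z) = 0)
    (x₀ : Fin n → ℝ) (u₀ : Fin m → ℝ) (heq : f (x₀, u₀) = 0)
    (y₀ : Fin m → ℝ) (hy₀ : φ (Pi.single (0 : Fin (r+1)) y₀) = x₀)
    (hsurj : Function.Surjective (fderiv ℝ φ (Pi.single (0 : Fin (r+1)) y₀)))
    (hB : LinearMap.range ((fderiv ℝ (fun u => f (x₀, u)) u₀ : (Fin m → ℝ) →ₗ[ℝ] (Fin n → ℝ))) =
      LinearMap.ker ((fderiv ℝ (fun p => F (x₀, p)) 0 : (Fin n → ℝ) →ₗ[ℝ] (Fin q → ℝ)))) :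
    ∑ j ∈ Finset.range (r + 1),
      Submodule.map ((((fderiv ℝ (fun x => f (x, u₀)) x₀) ^ j : (Fin n → ℝ) →L[ℝ] (Fin n → ℝ)) :
          (Fin n → ℝ) →ₗ[ℝ] (Fin n → ℝ)))
        (LinearMap.range ((fderiv ℝ (fun u => f (x₀, u)) u₀ : (Fin m → ℝ) →ₗ[ℝ] (Fin n → ℝ)))) = ⊤ := by
  classical
  set yhat : Fin (r+1) → (Fin m → ℝ) := Pi.single 0 y₀ with hyhatdef
  set z₀ : Fin (r+2) → (Fin m → ℝ) := Pi.single 0 y₀ with hz₀def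
  have hzsucc : ∀ i : Fin (r+1), z₀ i.succ = 0 := by
    intro i
    simp [hz₀def, Pi.single_apply, Fin.succ_ne_zero]
  have hres : resG m r z₀ = yhat := by
    funext j
    simp only [resG_apply, hz₀def, hyhatdef]
    rw [Pi.single_apply, Pi.single_apply]
    simp [Fin.castSucc_eq_zero_iff]
  set Dφ := fderiv ℝ φ yhat with hDφdef
  set Df := fderiv ℝ f (x₀, u₀) with hDfdef
  set DF := fderiv ℝ F (x₀, 0) with hDFdef
  set Aclm := fderiv ℝ (fun x => f (x, u₀)) x₀ with hAdef
  set Bm := fderiv ℝ (fun u => f (x₀, u)) u₀ with hBdef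
  -- partial derivatives of f
  have hA : Aclm = Df.comp (ContinuousLinearMap.inl ℝ (Fin n → ℝ) (Fin m → ℝ)) := by
    have h : HasFDerivAt (fun x => f (x, u₀))
        (Df.comp (ContinuousLinearMap.inl ℝ (Fin n → ℝ) (Fin m → ℝ))) x₀ :=
      (hf.differentiable (by simp) (x₀, u₀)).hasFDerivAt.comp x₀
        (hasFDerivAt_prodMk_left x₀ u₀)
    exact h.fderiv
  have hBm : Bm = Df.comp (ContinuousLinearMap.inr ℝ (Fin n → ℝ) (Fin m → ℝ)) := by
    have h : HasFDerivAt (fun u => f (x₀, u))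
        (Df.comp (ContinuousLinearMap.inr ℝ (Fin n → ℝ) (Fin m → ℝ))) u₀ :=
      (hf.differentiable (by simp) (x₀, u₀)).hasFDerivAt.comp u₀
        (hasFDerivAt_prodMk_right x₀ u₀)
    exact h.fderiv
  have hFp : fderiv ℝ (fun p => F (x₀, p)) 0
      = DF.comp (ContinuousLinearMap.inr ℝ (Fin n → ℝ) (Fin n → ℝ)) := by
    have h : HasFDerivAt (fun p => F (x₀, p))
        (DF.comp (ContinuousLinearMap.inr ℝ (Fin n → ℝ) (Fin n → ℝ))) 0 :=
      (hF.differentiable (by simp) (x₀, 0)).hasFDerivAt.comp 0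
        (hasFDerivAt_prodMk_right x₀ 0)
    exact h.fderiv
  -- splitting of DF
  have hsplit : ∀ a b : (Fin n → ℝ), DF (a, b) = DF (a, 0) + DF (0, b) := by
    intro a b
    rw [← map_add]
    congr 1
    simp
  -- kernel characterization
  have hker : ∀ x : (Fin n → ℝ), x ∈ LinearMap.range (Bm : (Fin m → ℝ) →ₗ[ℝ] (Fin n → ℝ)) ↔ DF (0, x) = 0 := by
    intro x
    rw [hB, hFp]
    simp [LinearMap.mem_ker]
  -- star relation: DF (ξ, Aclm ξ) = 0
  have hstar : ∀ ξ : (Fin n → ℝ), DF (ξ, 0) + DF (0, Aclm ξ) = 0 := by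
    have hconst : (fun p : (Fin n → ℝ) × (Fin m → ℝ) => F (p.1, f p)) = fun _ => 0 := by
      funext p
      have := hFf p.1 p.2
      simpa using this
    have hchain : HasFDerivAt (fun p : (Fin n → ℝ) × (Fin m → ℝ) => F (p.1, f p))
        (DF.comp ((ContinuousLinearMap.fst ℝ (Fin n → ℝ) (Fin m → ℝ)).prod Df)) (x₀, u₀) := by
      have hinner : HasFDerivAt (fun p : (Fin n → ℝ) × (Fin m → ℝ) => (p.1, f p))
          ((ContinuousLinearMap.fst ℝ (Fin n → ℝ) (Fin m → ℝ)).prod Df) (x₀, u₀) :=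
        (hasFDerivAt_fst).prodMk (hf.differentiable (by simp) (x₀, u₀)).hasFDerivAt
      have houter : HasFDerivAt F DF ((x₀, u₀).1, f (x₀, u₀)) := by
        have : ((x₀, u₀).1, f (x₀, u₀)) = ((x₀ : (Fin n → ℝ)), (0 : (Fin n → ℝ))) := by rw [heq]
        rw [this]
        exact (hF.differentiable (by simp) (x₀, 0)).hasFDerivAt
      exact houter.comp (x₀, u₀) hinner
    have h0 : DF.comp ((ContinuousLinearMap.fst ℝ (Fin n → ℝ) (Fin m → ℝ)).prod Df) = 0 := by
      have := hchain.fderiv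
      rw [hconst] at this
      rw [← this, fderiv_fun_const]
      rfl
    intro ξ
    have h1 := DFunLike.congr_fun h0 (ξ, 0)
    simp only [ContinuousLinearMap.comp_apply, ContinuousLinearMap.prod_apply,
      ContinuousLinearMap.coe_fst', ContinuousLinearMap.zero_apply] at h1
    have hAx : Aclm ξ = Df (ξ, 0) := by rw [hA]; simp
    rw [hAx, ← hsplit]
    exact h1
  -- master relation from the PDE
  have hmaster : ∀ w : Fin (r+2) → (Fin m → ℝ),
      DF (Dφ (resG m r w), ∑ i : Fin (r+1), Dφ (sig m r i w)) = 0 := by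
    have hLd := hasFDerivAt_Ltau φ hφ z₀ hzsucc
    rw [hres] at hLd
    have hφd : HasFDerivAt (fun z => φ (resG m r z)) (Dφ.comp (resG m r)) z₀ := by
      have : HasFDerivAt φ Dφ (resG m r z₀) := by
        rw [hres]; exact (hφ.differentiable (by simp) yhat).hasFDerivAt
      exact this.comp z₀ (resG m r).hasFDerivAt
    have hL0 : Ltau φ z₀ = 0 := by
      simp [Ltau, hzsucc]
    have hφ0 : φ (resG m r z₀) = x₀ := by rw [hres, hyhatdef, hy₀]
    have houter : HasFDerivAt F DF (φ (resG m r z₀), Ltau φ z₀) := by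
      rw [hφ0, hL0]
      exact (hF.differentiable (by simp) (x₀, 0)).hasFDerivAt
    have hchain : HasFDerivAt (fun z => F (φ (resG m r z), Ltau φ z))
        (DF.comp ((Dφ.comp (resG m r)).prod
          (∑ i : Fin (r+1), Dφ.comp (sig m r i)))) z₀ :=
      houter.comp z₀ (hφd.prodMk hLd)
    have hconst : (fun z => F (φ (resG m r z), Ltau φ z)) = fun _ => 0 := by
      funext z
      exact hPDE z
    have h0 : DF.comp ((Dφ.comp (resG m r)).prod
        (∑ i : Fin (r+1), Dφ.comp (sig m r i))) = 0 := by
      have := hchain.fderiv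
      rw [hconst] at this
      rw [← this, fderiv_fun_const]
      rfl
    intro w
    have h1 := DFunLike.congr_fun h0 w
    simpa [ContinuousLinearMap.sum_apply] using h1
  -- Relation R1
  have hR1 : ∀ v : (Fin m → ℝ), DF (0, Dφ (Pi.single (Fin.last r) v)) = 0 := by
    intro v
    have h := hmaster (Pi.single (Fin.last (r+1)) v)
    have hres0 : resG m r (Pi.single (Fin.last (r+1)) v) = 0 := by
      funext j
      simp only [resG_apply]
      rw [Pi.single_apply]
      simp [(Fin.castSucc_lt_last j).ne]
    have hsum : (∑ i : Fin (r+1), Dφ (sig m r i (Pi.single (Fin.last (r+1)) v)))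
        = Dφ (Pi.single (Fin.last r) v) := by
      rw [Finset.sum_eq_single (Fin.last r)]
      · simp [Fin.succ_last]
      · intro i _ hi
        have : i.succ ≠ Fin.last (r+1) := by
          rw [← Fin.succ_last]
          exact fun hc => hi (Fin.succ_injective _ hc)
        rw [sig_apply, Pi.single_apply]
        simp [this]
      · simp
    rw [hres0, hsum] at h
    simpa using h
  -- Relation R2
  have hR2 : ∀ (i : Fin r) (v : (Fin m → ℝ)),
      DF (Dφ (Pi.single i.succ v), 0) + DF (0, Dφ (Pi.single i.castSucc v)) = 0 := by
    intro i v
    have h := hmaster (Pi.single (i.succ.castSucc) v)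
    have hres1 : resG m r (Pi.single (i.succ.castSucc) v) = Pi.single i.succ v := by
      funext j
      simp only [resG_apply]
      rw [Pi.single_apply, Pi.single_apply]
      simp only [Fin.castSucc_inj]
    have hsum : (∑ i' : Fin (r+1), Dφ (sig m r i' (Pi.single (i.succ.castSucc) v)))
        = Dφ (Pi.single i.castSucc v) := by
      rw [Finset.sum_eq_single i.castSucc]
      · rw [sig_apply]
        congr 1
        congr 1
        rw [Fin.succ_castSucc]
        rw [Pi.single_apply]
        simp
      · intro i' _ hi'
        have : i'.succ ≠ i.succ.castSucc := by
          rw [← Fin.succ_castSucc]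
          exact fun hc => hi' (Fin.succ_injective _ hc)
        rw [sig_apply, Pi.single_apply]
        simp [this, hi']
      · simp
    rw [hres1, hsum, hsplit] at h
    exact h
  -- combine: for i : Fin r, Dφ (single i.castSucc v) - Aclm (Dφ (single i.succ v)) ∈ range Bm
  have hstep : ∀ (i : Fin r) (v : (Fin m → ℝ)),
      Dφ (Pi.single i.castSucc v) - Aclm (Dφ (Pi.single i.succ v)) ∈ LinearMap.range (Bm : (Fin m → ℝ) →ₗ[ℝ] (Fin n → ℝ)) := by
    intro i v
    rw [hker]
    have h1 := hR2 i v
    have h2 := hstar (Dφ (Pi.single i.succ v))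
    have : DF (0, Dφ (Pi.single i.castSucc v)) = DF (0, Aclm (Dφ (Pi.single i.succ v))) := by
      have e1 : DF (Dφ (Pi.single i.succ v), 0) = - DF (0, Aclm (Dφ (Pi.single i.succ v))) := by
        linear_combination h2
      rw [e1] at h1
      linear_combination h1
    have hzz : ((0:(Fin n → ℝ)), Dφ (Pi.single i.castSucc v) - Aclm (Dφ (Pi.single i.succ v)))
        = ((0:(Fin n → ℝ)), Dφ (Pi.single i.castSucc v))
          - ((0:(Fin n → ℝ)), Aclm (Dφ (Pi.single i.succ v))) := by simp
    rw [hzz, map_sub, this, sub_self]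
  -- the subspaces
  set S : ℕ → Submodule ℝ (Fin n → ℝ) := fun t => ∑ j ∈ Finset.range (t+1),
    Submodule.map ((Aclm ^ j : (Fin n → ℝ) →L[ℝ] (Fin n → ℝ)) : (Fin n → ℝ) →ₗ[ℝ] (Fin n → ℝ)) (LinearMap.range (Bm : (Fin m → ℝ) →ₗ[ℝ] (Fin n → ℝ))) with hSdef
  have hAmap : ∀ t : ℕ, ∀ x ∈ S t, Aclm x ∈ S (t+1) := by
    intro t x hx
    have hle : Submodule.map (Aclm : (Fin n → ℝ) →ₗ[ℝ] (Fin n → ℝ)) (S t) ≤ S (t+1) := by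
      rw [Submodule.map_le_iff_le_comap]
      apply sum_submodule_le
      intro j hj
      rw [← Submodule.map_le_iff_le_comap]
      intro y hy
      obtain ⟨b, hb, rfl⟩ := hy
      obtain ⟨c, hc, rfl⟩ := hb
      have : (Aclm : (Fin n → ℝ) →ₗ[ℝ] (Fin n → ℝ)) (((Aclm ^ j : (Fin n → ℝ) →L[ℝ] (Fin n → ℝ)) : (Fin n → ℝ) →ₗ[ℝ] (Fin n → ℝ)) c) = ((Aclm ^ (j+1) : (Fin n → ℝ) →L[ℝ] (Fin n → ℝ)) : (Fin n → ℝ) →ₗ[ℝ] (Fin n → ℝ)) c := by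
        rw [pow_succ']
        rfl
      rw [this]
      have hmem : (Aclm ^ (j+1)) c ∈ Submodule.map ((Aclm ^ (j+1) : (Fin n → ℝ) →L[ℝ] (Fin n → ℝ)) : (Fin n → ℝ) →ₗ[ℝ] (Fin n → ℝ)) (LinearMap.range (Bm : (Fin m → ℝ) →ₗ[ℝ] (Fin n → ℝ))) :=
        Submodule.mem_map_of_mem hc
      have : Submodule.map ((Aclm ^ (j+1) : (Fin n → ℝ) →L[ℝ] (Fin n → ℝ)) : (Fin n → ℝ) →ₗ[ℝ] (Fin n → ℝ)) (LinearMap.range (Bm : (Fin m → ℝ) →ₗ[ℝ] (Fin n → ℝ))) ≤ S (t+1) := by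
        apply Finset.single_le_sum (f := fun j => Submodule.map ((Aclm ^ j : (Fin n → ℝ) →L[ℝ] (Fin n → ℝ)) : (Fin n → ℝ) →ₗ[ℝ] (Fin n → ℝ)) (LinearMap.range (Bm : (Fin m → ℝ) →ₗ[ℝ] (Fin n → ℝ))))
          (fun _ _ => bot_le)
        rw [Finset.mem_range] at hj ⊢
        omega
      exact this hmem
    exact hle ⟨x, hx, rfl⟩
  have hBle : ∀ t : ℕ, LinearMap.range (Bm : (Fin m → ℝ) →ₗ[ℝ] (Fin n → ℝ)) ≤ S t := by
    intro t
    have := Finset.single_le_sum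
      (f := fun j => Submodule.map ((Aclm ^ j : (Fin n → ℝ) →L[ℝ] (Fin n → ℝ)) : (Fin n → ℝ) →ₗ[ℝ] (Fin n → ℝ)) (LinearMap.range (Bm : (Fin m → ℝ) →ₗ[ℝ] (Fin n → ℝ))))
      (fun _ _ => (bot_le : ⊥ ≤ _)) (Finset.mem_range.mpr (Nat.succ_pos t))
    refine le_trans ?_ this
    intro x hx
    exact ⟨x, hx, by simp⟩
  -- main claim by induction
  have claim : ∀ t : ℕ, t ≤ r → ∀ v : (Fin m → ℝ),
      Dφ (Pi.single (⟨r - t, by omega⟩ : Fin (r+1)) v) ∈ S t := by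
    intro t
    induction t with
    | zero =>
      intro _ v
      have : (⟨r - 0, by omega⟩ : Fin (r+1)) = Fin.last r := by
        ext; simp
      rw [this]
      exact hBle 0 ((hker _).mpr (hR1 v))
    | succ t ih =>
      intro ht v
      have ht' : t ≤ r := by omega
      set i : Fin r := ⟨r - (t+1), by omega⟩ with hidef
      have hcast : (⟨r - (t+1), by omega⟩ : Fin (r+1)) = i.castSucc := rfl
      have hsucc : i.succ = (⟨r - t, by omega⟩ : Fin (r+1)) := by
        ext
        simp [hidef, Fin.succ]
        omega
      have h1 := hstep i v
      have h2 : Aclm (Dφ (Pi.single i.succ v)) ∈ S (t+1) := by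
        apply hAmap
        rw [hsucc]
        exact ih ht' v
      have h3 : Dφ (Pi.single i.castSucc v) - Aclm (Dφ (Pi.single i.succ v)) ∈ S (t+1) :=
        hBle (t+1) h1
      have := Submodule.add_mem _ h3 h2
      simpa [hcast] using this
  -- conclude
  rw [eq_top_iff]
  intro x _
  obtain ⟨w, rfl⟩ := hsurj x
  have hdec : fderiv ℝ φ (Pi.single (0 : Fin (r+1)) y₀) w = ∑ j : Fin (r+1), Dφ (Pi.single j (w j)) := by
    rw [← map_sum]
    congr 1
    exact (Finset.univ_sum_single w).symm
  rw [hdec]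
  apply Submodule.sum_mem
  intro j _
  have hj : (j : ℕ) ≤ r := by omega
  have := claim (r - j) (by omega) (w j)
  have hjj : (⟨r - (r - j), by omega⟩ : Fin (r+1)) = j := by
    ext; simp; omega
  rw [hjj] at this
  have hmono : S (r - j) ≤ S r := by
    apply Finset.sum_le_sum_of_subset
    apply Finset.range_subset_range.mpr
    omega
  exact hmono this
end
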